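/- Fix m ∈ ℕ and distinct b₀, …, b_m ∈ ℂ. The ℂ[[z]]-module of operators ℂ[[z,w]]/(w^{m+1}) → ℂ[[z]] generated by L_{b_ℓ,k} (0 ≤ ℓ, k ≤ m), where L_{b,k}Φ = (1/k!)((∂/∂w + b∂/∂z)^k Φ)(·,0), equals the ℂ[[z]]-module generated by the operators Φ ↦ (∂^k Φ/∂z^j ∂w^{k-j})(·,0) for 0 ≤ j ≤ k ≤ m. In particular this module is independent of the choice of the distinct points b₀,…,b_m. -/

import Mathlib

open PowerSeries

/-- `ℂ[[z]][[w]]`: a model for the formal power series ring `ℂ[[z,w]]`. -/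
abbrev FPS2 := PowerSeries (PowerSeries ℂ)

/-- The formal partial derivative `∂/∂w` on `ℂ[[z,w]]`. -/
noncomputable def dW : FPS2 → FPS2 := PowerSeries.derivativeFun

/-- The formal partial derivative `∂/∂z` on `ℂ[[z,w]]` (coefficientwise). -/
noncomputable def dZ (Φ : FPS2) : FPS2 :=
  PowerSeries.mk fun k => PowerSeries.derivativeFun (coeff k Φ)

/-- The operator `L_{b,k} Φ = (1/k!)((∂/∂w + b ∂/∂z)^k Φ)(·,0)`. -/
noncomputable def Lbk (b : ℂ) (k : ℕ) (Φ : FPS2) : PowerSeries ℂ :=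
  ((k.factorial : ℂ)⁻¹) •
    constantCoeff ((fun Ψ => dW Ψ + b • dZ Ψ)^[k] Φ)

/-- The operator `Φ ↦ (∂^{j+i}Φ/∂z^j∂w^i)(·,0)`. -/
noncomputable def Dop (j i : ℕ) (Φ : FPS2) : PowerSeries ℂ :=
  constantCoeff (dZ^[j] (dW^[i] Φ))

lemma coeff_derivativeFun' {R : Type*} [CommSemiring R] (f : PowerSeries R) (n : ℕ) :
    coeff n (derivativeFun f) = coeff (n + 1) f * (n + 1) := coeff_derivative f n

lemma derivativeFun_C' {R : Type*} [CommSemiring R] (r : R) :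
    derivativeFun (C r) = 0 := derivative_C

lemma derivFun_mul_natCast (ψ : PowerSeries ℂ) (n : ℕ) :
    derivativeFun (ψ * (n : PowerSeries ℂ)) = derivativeFun ψ * n := by
  rw [derivativeFun_mul, ← map_natCast (C (R := ℂ)) n, derivativeFun_C', smul_zero, zero_add,
    smul_eq_mul, map_natCast, mul_comm]

noncomputable def dWL : FPS2 →ₗ[ℂ] FPS2 where
  toFun := dW
  map_add' := derivativeFun_add
  map_smul' c Φ := by
    apply PowerSeries.ext; intro n
    show coeff n (derivativeFun (c • Φ)) = coeff n (c • derivativeFun Φ)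
    rw [coeff_derivativeFun']
    rw [show coeff (n+1) (c • Φ) = c • coeff (n+1) Φ from rfl,
      show coeff n (c • derivativeFun Φ) = c • coeff n (derivativeFun Φ) from rfl,
      coeff_derivativeFun', smul_mul_assoc]

noncomputable def dZL : FPS2 →ₗ[ℂ] FPS2 where
  toFun := dZ
  map_add' Φ Ψ := by
    apply PowerSeries.ext; intro n
    simp [dZ, derivativeFun_add]
  map_smul' c Φ := by
    apply PowerSeries.ext; intro n
    show coeff n (dZ (c • Φ)) = coeff n (c • dZ Φ)
    simp only [dZ, coeff_mk]
    rw [show coeff n (c • Φ) = c • coeff n Φ from rfl,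
      show coeff n (c • PowerSeries.mk fun k => derivativeFun (coeff k Φ)) = c • coeff n (PowerSeries.mk fun k => derivativeFun (coeff k Φ)) from rfl,
      derivativeFun_smul, coeff_mk]

lemma dW_comm_dZ : dW ∘ dZ = dZ ∘ dW := by
  funext Φ
  apply PowerSeries.ext; intro n
  show coeff n (dW (dZ Φ)) = coeff n (dZ (dW Φ))
  rw [show dW (dZ Φ) = derivativeFun (dZ Φ) from rfl, coeff_derivativeFun']
  simp only [dZ, coeff_mk]
  rw [show dW Φ = derivativeFun Φ from rfl, coeff_derivativeFun',
    show ((n : PowerSeries ℂ) + 1) = ((n+1 : ℕ) : PowerSeries ℂ) by push_cast; ring,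
    derivFun_mul_natCast]

lemma commute_L : Commute dWL dZL := by
  have h : ⇑(dWL * dZL) = ⇑(dZL * dWL) := dW_comm_dZ
  exact LinearMap.ext fun x => congrFun h x

lemma dWL_coe : ⇑dWL = dW := rfl
lemma dZL_coe : ⇑dZL = dZ := rfl

lemma Lbk_eq (b : ℂ) (k : ℕ) :
    Lbk b k = ∑ j ∈ Finset.range (k+1),
      ((k.factorial : ℂ)⁻¹ * (k.choose j) * b^j) • Dop j (k-j) := by
  funext Φ
  have hfn : (fun Ψ => dW Ψ + b • dZ Ψ) = ⇑(dWL + b • dZL) := by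
    funext Ψ; simp [dWL_coe, dZL_coe]
  have hpow : (dWL + b • dZL)^k
      = ∑ j ∈ Finset.range (k+1), (b • dZL)^j * dWL^(k-j) * (k.choose j : Module.End ℂ FPS2) := by
    rw [add_comm]
    exact (commute_L.symm.smul_left b).add_pow k
  show ((k.factorial : ℂ)⁻¹) • constantCoeff ((fun Ψ => dW Ψ + b • dZ Ψ)^[k] Φ) = _
  rw [hfn, ← Module.End.pow_apply, hpow]
  rw [LinearMap.sum_apply, map_sum, Finset.smul_sum, Finset.sum_apply]
  refine Finset.sum_congr rfl fun j hj => ?_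
  rw [Module.End.mul_apply, Module.End.natCast_apply, map_nsmul, map_nsmul,
    smul_pow, Module.End.mul_apply, LinearMap.smul_apply, Module.End.pow_apply, Module.End.pow_apply,
    dWL_coe, dZL_coe]
  show (k.factorial : ℂ)⁻¹ • (k.choose j) • (b^j • constantCoeff (dZ^[j] (dW^[k-j] Φ))) = _
  rw [← Nat.cast_smul_eq_nsmul ℂ, smul_smul, smul_smul, Pi.smul_apply]
  rfl

/-- for distinct `b₀,…,b_m`, the `ℂ[[z]]`-module of operators
generated by `L_{b_ℓ,k}` (`0 ≤ ℓ,k ≤ m`) equals the `ℂ[[z]]`-module generated by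
the operators `Φ ↦ (∂^kΦ/∂z^j∂w^{k-j})(·,0)`, `0 ≤ j ≤ k ≤ m`; in particular it
is independent of the choice of the distinct points `b₀,…,b_m`. -/
theorem Lbk_span_eq_derivative_span (m : ℕ)
    (b : Fin (m + 1) → ℂ) (hb : Function.Injective b) :
    Submodule.span (PowerSeries ℂ)
        ({g : FPS2 → PowerSeries ℂ |
          ∃ ℓ k : Fin (m + 1), g = Lbk (b ℓ) (k : ℕ)}) =
      Submodule.span (PowerSeries ℂ)
        ({g : FPS2 → PowerSeries ℂ | ∃ j i : ℕ, j + i ≤ m ∧ g = Dop j i}) := by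
  apply le_antisymm
  · rw [Submodule.span_le]
    rintro g ⟨ℓ, k, rfl⟩
    rw [Lbk_eq]
    apply Submodule.sum_mem
    intro j hj
    have hjk : j ≤ (k : ℕ) := Nat.lt_succ_iff.mp (Finset.mem_range.mp hj)
    have hmem : Dop j ((k : ℕ) - j) ∈
        Submodule.span (PowerSeries ℂ)
          ({g : FPS2 → PowerSeries ℂ | ∃ j i : ℕ, j + i ≤ m ∧ g = Dop j i}) :=
      Submodule.subset_span ⟨j, (k : ℕ) - j, by have := k.is_le; omega, rfl⟩
    exact Submodule.smul_of_tower_mem _ _ hmem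
  · rw [Submodule.span_le]
    rintro g ⟨j, i, hji, rfl⟩
    set k := j + i with hk
    have hk1 : k + 1 ≤ m + 1 := by omega
    set b' : Fin (k+1) → ℂ := fun ℓ => b (Fin.castLE hk1 ℓ) with hb'
    have hb'inj : Function.Injective b' := fun x y h => by
      have := hb h
      exact Fin.castLE_injective hk1 this
    set V : Matrix (Fin (k+1)) (Fin (k+1)) ℂ := Matrix.vandermonde b' with hV
    have hdet : IsUnit V.det := by
      rw [hV, Matrix.det_vandermonde]
      apply IsUnit.mk0
      apply Finset.prod_ne_zero_iff.mpr
      intro x hx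
      apply Finset.prod_ne_zero_iff.mpr
      intro y hy
      have : x < y := by simpa [Finset.mem_Ioi] using hy
      exact sub_ne_zero_of_ne fun h => absurd (hb'inj h.symm) this.ne
    set jF : Fin (k+1) := ⟨j, by omega⟩ with hjF
    set c : Fin (k+1) → ℂ := Matrix.vecMul (Pi.single jF 1) V⁻¹ with hc
    have hcV : Matrix.vecMul c V = Pi.single jF 1 := by
      rw [hc, Matrix.vecMul_vecMul, Matrix.nonsing_inv_mul V hdet, Matrix.vecMul_one]
    have hsum : ∀ n : Fin (k+1), (∑ ℓ, c ℓ * b' ℓ ^ (n : ℕ)) = if n = jF then 1 else 0 := by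
      intro n
      have := congrFun hcV n
      rw [Matrix.vecMul, dotProduct] at this
      simpa [hV, Matrix.vandermonde, Pi.single_apply] using this
    set a : ℕ → ℂ := fun j' => (k.factorial : ℂ)⁻¹ * (k.choose j') with ha
    have key : (∑ ℓ : Fin (k+1), c ℓ • Lbk (b' ℓ) k) = a j • Dop j i := by
      simp only [Lbk_eq, Finset.smul_sum, smul_smul]
      rw [Finset.sum_comm]
      simp only [← Finset.sum_smul]
      have hterm : ∀ j', (h : j' < k+1) → (∑ ℓ, c ℓ * ((k.factorial : ℂ)⁻¹ * (k.choose j') * b' ℓ ^ j'))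
          = a j' * (if (⟨j', h⟩ : Fin (k+1)) = jF then 1 else 0) := by
        intro j' h
        rw [← hsum ⟨j', h⟩, Finset.mul_sum]
        exact Finset.sum_congr rfl fun ℓ _ => by rw [ha]; ring
      rw [Finset.sum_eq_single_of_mem j (Finset.mem_range.mpr (by omega))]
      · rw [hterm j (by omega), if_pos rfl, mul_one, show k - j = i by omega]
      · intro j' hj' hne
        rw [hterm j' (Finset.mem_range.mp hj'),
          if_neg (by simp [hjF, Fin.mk.injEq]; exact hne), mul_zero, zero_smul]
    have haj : a j ≠ 0 := by
      rw [ha]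
      refine mul_ne_zero (inv_ne_zero ?_) ?_
      · exact_mod_cast Nat.factorial_ne_zero k
      · exact_mod_cast Nat.choose_pos (by omega : j ≤ k) |>.ne'
    have hDop : Dop j i = (a j)⁻¹ • ∑ ℓ : Fin (k+1), c ℓ • Lbk (b' ℓ) k := by
      rw [key, smul_smul, inv_mul_cancel₀ haj, one_smul]
    rw [SetLike.mem_coe, hDop]
    refine Submodule.smul_of_tower_mem _ _ (Submodule.sum_mem _ fun ℓ _ => ?_)
    refine Submodule.smul_of_tower_mem _ _ (Submodule.subset_span ?_)
    exact ⟨Fin.castLE hk1 ℓ, ⟨k, by omega⟩, rfl⟩
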